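/- Fix a constant q > 0 and let B_ME[U] = {M | ME[U](M) ≤ q}, restricted to programs without low-security inputs. Then B_ME[U] is a (⌊2^q⌋+1)-safety property, but it is not a k-safety property for any k ≤ ⌊2^q⌋. -/

import Mathlib

/-!
Statement 16: Fix `q > 0` and let `B_ME[U] = {M | ME[U](M) ≤ q}`, restricted to
programs without low-security inputs.  Then `B_ME[U]` is a `(⌊2^q⌋+1)`-safety
property, but it is not a `k`-safety property for any `k ≤ ⌊2^q⌋`.
-/

/-- A deterministic program without low-security inputs: a finite nonempty
high-security input set `Hs` and behavior `f` (inputs and outputs drawn from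
the fixed countable universe `ℕ`). -/
structure ProgNL where
  Hs : Finset ℕ
  hH : Hs.Nonempty
  f : ℕ → ℕ

/-- The set of traces `⟦M⟧ = {(h,o) | h ∈ ℍ, o = M(h)}`. -/
def ProgNL.traces (M : ProgNL) : Set (ℕ × ℕ) :=
  {t | t.1 ∈ M.Hs ∧ t.2 = M.f t.1}

/-- The uniform distribution on the input set of `M`. -/
noncomputable def ProgNL.U (M : ProgNL) : ℕ → ℝ :=
  fun h => if h ∈ M.Hs then (M.Hs.card : ℝ)⁻¹ else 0

/-- Probability `U(O = o)` where `O = M(H)`. -/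
noncomputable def ProgNL.pO (M : ProgNL) (o : ℕ) : ℝ :=
  ∑ h ∈ M.Hs, if M.f h = o then M.U h else 0

/-- Vulnerability `𝓥[U](H) = max_h U(h)`. -/
noncomputable def ProgNL.VH (M : ProgNL) : ℝ :=
  M.Hs.sup' M.hH M.U

/-- Conditional vulnerability `𝓥[U](H|O) = Σ_o U(O=o) · max_h U(H=h|O=o)`. -/
noncomputable def ProgNL.VHO (M : ProgNL) : ℝ :=
  ∑ o ∈ M.Hs.image M.f,
    M.pO o * M.Hs.sup' M.hH fun h => (if M.f h = o then M.U h else 0) / M.pO o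

/-- Min-entropy-based QIF under the uniform distribution:
`ME[U](M) = 𝓗∞[U](H) − 𝓗∞[U](H|O)` with `𝓗∞ = log₂(1/𝓥)`. -/
noncomputable def ProgNL.MEU (M : ProgNL) : ℝ :=
  Real.logb 2 (1 / M.VH) - Real.logb 2 (1 / M.VHO)

/-- A set `P` of programs is a `k`-safety property iff whenever `M ∉ P`, there
is a set `T ⊆ ⟦M⟧` of at most `k` traces such that every program `M'` with
`T ⊆ ⟦M'⟧` satisfies `M' ∉ P`. -/
def IsKSafety (k : ℕ) (P : ProgNL → Prop) : Prop :=
  ∀ M : ProgNL, ¬ P M →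
    ∃ T ⊆ M.traces, T.ncard ≤ k ∧ ∀ M' : ProgNL, T ⊆ M'.traces → ¬ P M'

namespace ProgNL
variable (M : ProgNL)

lemma card_pos : (0:ℝ) < (M.Hs.card : ℝ) := by
  exact_mod_cast Finset.card_pos.mpr M.hH

lemma VH_eq : M.VH = (M.Hs.card : ℝ)⁻¹ := by
  unfold VH
  rw [Finset.sup'_congr M.hH rfl (g := fun _ => (M.Hs.card : ℝ)⁻¹)
    (fun h hh => by simp [U, hh]), Finset.sup'_const]

lemma pO_eq (o : ℕ) :
    M.pO o = ((M.Hs.filter (fun h => M.f h = o)).card : ℝ) * (M.Hs.card : ℝ)⁻¹ := by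
  unfold pO
  have h1 : ∀ h ∈ M.Hs, (if M.f h = o then M.U h else 0)
      = (if M.f h = o then (M.Hs.card : ℝ)⁻¹ else 0) := fun h hh => by simp [U, hh]
  rw [Finset.sum_congr rfl h1, ← Finset.sum_filter, Finset.sum_const, nsmul_eq_mul]

lemma pO_pos {o : ℕ} (ho : o ∈ M.Hs.image M.f) : 0 < M.pO o := by
  rw [pO_eq]
  obtain ⟨h, hh, hf⟩ := Finset.mem_image.mp ho
  have : 0 < (M.Hs.filter (fun h => M.f h = o)).card :=
    Finset.card_pos.mpr ⟨h, Finset.mem_filter.mpr ⟨hh, hf⟩⟩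
  have h2 : (0:ℝ) < ((M.Hs.filter (fun h => M.f h = o)).card : ℝ) := by exact_mod_cast this
  exact mul_pos h2 (inv_pos.mpr M.card_pos)

lemma VHO_eq : M.VHO = ((M.Hs.image M.f).card : ℝ) * (M.Hs.card : ℝ)⁻¹ := by
  unfold VHO
  rw [Finset.sum_congr rfl (fun o ho => ?_), Finset.sum_const, nsmul_eq_mul]
  have hp := M.pO_pos ho
  obtain ⟨h0, hh0, hf0⟩ := Finset.mem_image.mp ho
  have hsup : (M.Hs.sup' M.hH fun h => (if M.f h = o then M.U h else 0) / M.pO o)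
      = (M.Hs.card : ℝ)⁻¹ / M.pO o := by
    apply le_antisymm
    · apply Finset.sup'_le
      intro h hh
      by_cases hf : M.f h = o
      · simp [hf, U, hh]
      · simp only [hf, if_false, zero_div]
        positivity
    · have := Finset.le_sup' (fun h => (if M.f h = o then M.U h else 0) / M.pO o) hh0
      simpa [hf0, U, hh0, -Finset.le_sup'_iff] using this
  rw [hsup, mul_div_cancel₀ _ (ne_of_gt hp)]

lemma MEU_eq : M.MEU = Real.logb 2 ((M.Hs.image M.f).card : ℝ) := by
  have hn := M.card_pos
  have hc : (0:ℝ) < ((M.Hs.image M.f).card : ℝ) := by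
    have : (M.Hs.image M.f).Nonempty := M.hH.image _
    exact_mod_cast Finset.card_pos.mpr this
  unfold MEU
  rw [VH_eq, VHO_eq, one_div, one_div, inv_inv, mul_inv, inv_inv,
    Real.logb_mul (by positivity) (ne_of_gt hn), Real.logb_inv]
  ring

lemma MEU_le_iff (q : ℝ) : M.MEU ≤ q ↔ ((M.Hs.image M.f).card : ℝ) ≤ (2:ℝ) ^ q := by
  have hc : (0:ℝ) < ((M.Hs.image M.f).card : ℝ) := by
    have : (M.Hs.image M.f).Nonempty := M.hH.image _
    exact_mod_cast Finset.card_pos.mpr this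
  rw [MEU_eq, Real.logb_le_iff_le_rpow one_lt_two hc]

end ProgNL


/-- For a constant bound `q > 0`, the bounding problem
`B_ME[U] = {M | ME[U](M) ≤ q}` for programs without low-security inputs is
`(⌊2^q⌋+1)`-safety, but not `k`-safety for any `k ≤ ⌊2^q⌋`. -/
theorem B_ME_ksafety (q : ℝ) (hq : 0 < q) :
    IsKSafety (⌊(2 : ℝ) ^ q⌋₊ + 1) (fun M => M.MEU ≤ q) ∧
      ∀ k : ℕ, k ≤ ⌊(2 : ℝ) ^ q⌋₊ → ¬ IsKSafety k (fun M => M.MEU ≤ q) := by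
  set m := ⌊(2 : ℝ) ^ q⌋₊ with hm
  have h2q : (0:ℝ) < (2:ℝ) ^ q := Real.rpow_pos_of_pos two_pos q
  have hmlt : (m : ℝ) ≤ (2:ℝ) ^ q := Nat.floor_le h2q.le
  have hm1lt : (2:ℝ) ^ q < (m : ℝ) + 1 := Nat.lt_floor_add_one _
  have hm1 : 1 ≤ m := Nat.le_floor (by
    exact_mod_cast ((Real.one_lt_rpow_iff_of_pos two_pos).mpr (Or.inl ⟨one_lt_two, hq⟩)).le)
  constructor
  · intro M hM
    simp only [ProgNL.MEU_le_iff, not_le] at hM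
    have hcard : m + 1 ≤ (M.Hs.image M.f).card :=
      (Nat.floor_lt h2q.le).mpr (by exact_mod_cast hM)
    obtain ⟨S, hS, hScard⟩ := Finset.exists_subset_card_eq (s := M.Hs.image M.f) (n := m+1) hcard
    -- witness function
    have hwit : ∀ o ∈ S, ∃ h ∈ M.Hs, M.f h = o := fun o ho => by
      simpa [Finset.mem_image] using hS ho
    classical
    choose! g hg1 hg2 using hwit
    refine ⟨↑(S.image fun o => (g o, o)), ?_, ?_, ?_⟩
    · intro t ht
      simp only [Finset.coe_image, Set.mem_image, Finset.mem_coe] at ht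
      obtain ⟨o, ho, rfl⟩ := ht
      exact ⟨hg1 o ho, (hg2 o ho).symm⟩
    · rw [Set.ncard_coe_finset, Finset.card_image_of_injOn
        (fun a _ b _ h => congrArg Prod.snd h), hScard]
    · intro M' hT
      simp only [ProgNL.MEU_le_iff, not_le]
      have hsub : S ⊆ M'.Hs.image M'.f := by
        intro o ho
        have : ((g o, o) : ℕ × ℕ) ∈ M'.traces := hT (by
          simp only [Finset.coe_image, Set.mem_image, Finset.mem_coe]
          exact ⟨o, ho, rfl⟩)
        exact Finset.mem_image.mpr ⟨g o, this.1, this.2.symm⟩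
      calc (2:ℝ) ^ q < (m:ℝ) + 1 := hm1lt
        _ ≤ ((M'.Hs.image M'.f).card : ℝ) := by
            have := Finset.card_le_card hsub
            rw [hScard] at this
            exact_mod_cast this
  · intro k hk hsafe
    set M : ProgNL := ⟨Finset.range (m+1), ⟨0, by simp⟩, id⟩ with hMdef
    have hMim : M.Hs.image M.f = Finset.range (m+1) := Finset.image_id
    have hMnot : ¬ M.MEU ≤ q := by
      rw [ProgNL.MEU_le_iff, not_le, hMim]
      simpa using hm1lt
    obtain ⟨T, hT, hTcard, hAll⟩ := hsafe M hMnot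
    have hTfin : T.Finite := by
      apply Set.Finite.subset (Finset.finite_toSet (M.Hs ×ˢ (M.Hs.image M.f)))
      intro t ht
      have := hT ht
      simp only [Finset.coe_product, Set.mem_prod, Finset.mem_coe]
      exact ⟨this.1, this.2 ▸ Finset.mem_image_of_mem _ this.1⟩
    by_cases hTe : T = ∅
    · refine hAll ⟨{0}, ⟨0, by simp⟩, id⟩ (by simp [hTe]) ?_
      simp only [ProgNL.MEU_le_iff]
      have h3 : (({0} : Finset ℕ).image id).card = 1 := by simp
      rw [h3]
      exact_mod_cast le_trans (by exact_mod_cast hm1) hmlt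
    · have hTne : T.Nonempty := Set.nonempty_iff_ne_empty.mpr hTe
      set S := hTfin.toFinset with hSdef
      have hSne : (S.image Prod.fst).Nonempty := by
        obtain ⟨t, ht⟩ := hTne
        exact ⟨t.1, Finset.mem_image_of_mem _ (hTfin.mem_toFinset.mpr ht)⟩
      refine hAll ⟨S.image Prod.fst, hSne, id⟩ ?_ ?_
      · intro t ht
        have h1 : t ∈ S := hTfin.mem_toFinset.mpr ht
        refine ⟨Finset.mem_image_of_mem _ h1, ?_⟩
        exact (hT ht).2
      · simp only [ProgNL.MEU_le_iff]
        have hle : ((S.image Prod.fst).image id).card ≤ m := by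
          rw [Finset.image_id]
          calc (S.image Prod.fst).card ≤ S.card := Finset.card_image_le
            _ = T.ncard := (Set.ncard_eq_toFinset_card T hTfin).symm
            _ ≤ k := hTcard
            _ ≤ m := hk
        calc (((S.image Prod.fst).image id).card : ℝ) ≤ (m:ℝ) := by exact_mod_cast hle
          _ ≤ (2:ℝ) ^ q := hmlt
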